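/- In the copycat esp CC_A, one has (i, a) ⇢ (j, a') (immediate causality) if and only if either (1) i = j, a ⇢_A a', and ((i,a) is positive in CC_A or (j,a') is negative in CC_A); or (2) i ≠ j, a = a', and (i, a) is negative in CC_A. -/

import Mathlib

/-- An event structure presented as raw data: a set of events, a causality
relation and a consistency predicate on (finite) sets of events. -/
structure ES where
  Evt : Type
  le : Evt → Evt → Prop
  Con : Set (Set Evt)

namespace ES

/-- Strict causality. -/
def lt (E : ES) (a b : E.Evt) : Prop := E.le a b ∧ a ≠ b

/-- The axioms of event structures: `le` is a partial order, causes `[e]` are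
finite, consistency is a nonempty collection of finite sets, closed under
subsets, containing all singletons, and closed under adding causal
dependencies. -/
def IsES (E : ES) : Prop :=
  (∀ e, E.le e e) ∧
  (∀ a b c, E.le a b → E.le b c → E.le a c) ∧
  (∀ a b, E.le a b → E.le b a → a = b) ∧
  (∀ e, {e' | E.le e' e}.Finite) ∧
  E.Con.Nonempty ∧
  (∀ X ∈ E.Con, X.Finite) ∧
  (∀ e, ({e} : Set E.Evt) ∈ E.Con) ∧
  (∀ X ∈ E.Con, ∀ Y, Y ⊆ X → Y ∈ E.Con) ∧
  (∀ X ∈ E.Con, ∀ e ∈ X, ∀ e', E.le e' e → insert e' X ∈ E.Con)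

/-- A (finite) configuration: a finite, consistent and down-closed set of events. -/
def Config (E : ES) (x : Set E.Evt) : Prop :=
  x.Finite ∧ (∀ Y, Y ⊆ x → Y.Finite → Y ∈ E.Con) ∧
  ∀ e ∈ x, ∀ e', E.le e' e → e' ∈ x

/-- Immediate causality `e ⇢ e'`. -/
def imc (E : ES) (a b : E.Evt) : Prop :=
  E.lt a b ∧ ∀ c, E.le a c → E.le c b → c = a ∨ c = b

/-- Simple parallel composition of event structures. -/
def par (E F : ES) : ES where
  Evt := E.Evt ⊕ F.Evt
  le := fun p q =>
    match p, q with
    | Sum.inl a, Sum.inl b => E.le a b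
    | Sum.inr a, Sum.inr b => F.le a b
    | _, _ => False
  Con := {X | Sum.inl ⁻¹' X ∈ E.Con ∧ Sum.inr ⁻¹' X ∈ F.Con}

/-- Projection (hiding): restrict an event structure to a subset `V` of events. -/
def proj (E : ES) (V : Set E.Evt) : ES where
  Evt := ↥V
  le := fun a b => E.le a.val b.val
  Con := {X | Subtype.val '' X ∈ E.Con}

end ES

/-- A (total) map of event structures: preserves configurations and is
injective on each configuration. -/
def IsMap (E F : ES) (f : E.Evt → F.Evt) : Prop :=
  (∀ x, E.Config x → F.Config (f '' x)) ∧ ∀ x, E.Config x → Set.InjOn f x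
/-- An event structure with polarities (`true` = positive/Player,
`false` = negative/Opponent). -/
structure ESP extends ES where
  pol : Evt → Bool

namespace ESP

/-- The dual game: polarities reversed. -/
def dual (A : ESP) : ESP where
  toES := A.toES
  pol := fun a => !A.pol a

/-- Simple parallel composition of games. -/
def par (A B : ESP) : ESP where
  toES := A.toES.par B.toES
  pol := Sum.elim A.pol B.pol

end ESP

/-- A pre-strategy on the game `A`: a polarity-preserving map of event
structures `σ : S → A`. -/
def IsPreStrategy (S A : ESP) (σ : S.Evt → A.Evt) : Prop :=
  IsMap S.toES A.toES σ ∧ ∀ s, A.pol (σ s) = S.pol s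

/-- `polExt pol b x y` means `x ⊆ y` and all events of `y \ x` have polarity `b`;
so `polExt pol true x y` is `x ⊆⁺ y` and `polExt pol false x y` is `x ⊆⁻ y`. -/
def polExt {α : Type} (pol : α → Bool) (b : Bool) (x y : Set α) : Prop :=
  x ⊆ y ∧ ∀ a ∈ y, a ∉ x → pol a = b

/-- The Scott order: `x ⊑ y` iff `x ⊇⁻ (x ∩ y) ⊆⁺ y`. -/
def scottLE {α : Type} (pol : α → Bool) (x y : Set α) : Prop :=
  polExt pol false (x ∩ y) x ∧ polExt pol true (x ∩ y) y

/-- Courtesy: immediate causal links other than `− ⇢ +` are sent to immediate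
causal links of the game. -/
def Courteous (S A : ESP) (σ : S.Evt → A.Evt) : Prop :=
  ∀ s s', S.toES.imc s s' → (S.pol s, S.pol s') ≠ (false, true) →
    A.toES.imc (σ s) (σ s')

/-- Receptivity: every negative extension of `σ x` in the game is matched by a
unique extension of `x`. -/
def Receptive (S A : ESP) (σ : S.Evt → A.Evt) : Prop :=
  ∀ x, S.toES.Config x → ∀ a, A.pol a = false → a ∉ σ '' x →
    A.toES.Config (insert a (σ '' x)) →
    ∃! s, s ∉ x ∧ S.toES.Config (insert s x) ∧ σ s = a
/-- The generating relation of copycat causality on `A^⊥ ∥ A`: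
the causality of `A^⊥ ∥ A` together with the links from each negative
occurrence to the corresponding positive occurrence on the other side. -/
def ccGen (A : ESP) : (A.Evt ⊕ A.Evt) → (A.Evt ⊕ A.Evt) → Prop :=
  fun p q => (A.dual.par A).le p q ∨
    (∃ a, A.pol a = true ∧ p = Sum.inl a ∧ q = Sum.inr a) ∨
    (∃ a, A.pol a = false ∧ p = Sum.inr a ∧ q = Sum.inl a)

/-- The copycat structure `CC_A` on the game `A`. -/
def CC (A : ESP) : ESP where
  Evt := A.Evt ⊕ A.Evt
  le := Relation.ReflTransGen (ccGen A)
  Con := {X | {e | ∃ e' ∈ X, Relation.ReflTransGen (ccGen A) e e'} ∈ (A.dual.par A).Con}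
  pol := (A.dual.par A).pol


/-- Auxiliary: explicit characterisation of copycat causality. -/
def ccR (A : ESP) : (A.Evt ⊕ A.Evt) → (A.Evt ⊕ A.Evt) → Prop
  | Sum.inl a, Sum.inl b => A.le a b
  | Sum.inr a, Sum.inr b => A.le a b
  | Sum.inl a, Sum.inr b => ∃ c, A.le a c ∧ A.le c b ∧ A.pol c = true
  | Sum.inr a, Sum.inl b => ∃ c, A.le a c ∧ A.le c b ∧ A.pol c = false

theorem ccGen_par_inl_inl {A : ESP} {a b : A.Evt} :
    (A.dual.par A).le (Sum.inl a) (Sum.inl b) ↔ A.le a b := Iff.rfl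
theorem ccGen_par_inr_inr {A : ESP} {a b : A.Evt} :
    (A.dual.par A).le (Sum.inr a) (Sum.inr b) ↔ A.le a b := Iff.rfl
theorem ccGen_par_inl_inr {A : ESP} {a b : A.Evt} :
    (A.dual.par A).le (Sum.inl a) (Sum.inr b) ↔ False := Iff.rfl
theorem ccGen_par_inr_inl {A : ESP} {a b : A.Evt} :
    (A.dual.par A).le (Sum.inr a) (Sum.inl b) ↔ False := Iff.rfl

theorem cc_le_iff (A : ESP)
    (hrefl : ∀ e, A.le e e)
    (htrans : ∀ a b c, A.le a b → A.le b c → A.le a c)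
    (p q : A.Evt ⊕ A.Evt) :
    Relation.ReflTransGen (ccGen A) p q ↔ ccR A p q := by
  constructor
  · intro h
    induction h with
    | refl => cases p <;> exact hrefl _
    | tail h1 step ih =>
      rename_i q r
      rcases step with hle | ⟨a, hpa, rfl, rfl⟩ | ⟨a, hpa, rfl, rfl⟩
      · cases q with
        | inl a =>
          cases r with
          | inl b =>
            change A.le a b at hle
            cases p with
            | inl c => exact htrans _ _ _ ih hle
            | inr c =>
              obtain ⟨d, h1, h2, h3⟩ := ih
              exact ⟨d, h1, htrans _ _ _ h2 hle, h3⟩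
          | inr b => exact absurd hle (ccGen_par_inl_inr.mp)
        | inr a =>
          cases r with
          | inl b => exact absurd hle (ccGen_par_inr_inl.mp)
          | inr b =>
            change A.le a b at hle
            cases p with
            | inl c =>
              obtain ⟨d, h1, h2, h3⟩ := ih
              exact ⟨d, h1, htrans _ _ _ h2 hle, h3⟩
            | inr c => exact htrans _ _ _ ih hle
      · cases p with
        | inl b => exact ⟨a, ih, hrefl a, hpa⟩
        | inr b =>
          obtain ⟨d, h1, h2, h3⟩ := ih
          exact htrans _ _ _ h1 h2
      · cases p with
        | inl b =>
          obtain ⟨d, h1, h2, h3⟩ := ih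
          exact htrans _ _ _ h1 h2
        | inr b => exact ⟨a, ih, hrefl a, hpa⟩
  · intro h
    cases p with
    | inl a =>
      cases q with
      | inl b => exact Relation.ReflTransGen.single (Or.inl h)
      | inr b =>
        obtain ⟨c, h1, h2, h3⟩ := h
        have s1 : Relation.ReflTransGen (ccGen A) (Sum.inl a) (Sum.inl c) :=
          Relation.ReflTransGen.single (Or.inl h1)
        have s2 : Relation.ReflTransGen (ccGen A) (Sum.inl c) (Sum.inr c) :=
          Relation.ReflTransGen.single (Or.inr (Or.inl ⟨c, h3, rfl, rfl⟩))
        have s3 : Relation.ReflTransGen (ccGen A) (Sum.inr c) (Sum.inr b) :=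
          Relation.ReflTransGen.single (Or.inl h2)
        exact s1.trans (s2.trans s3)
    | inr a =>
      cases q with
      | inl b =>
        obtain ⟨c, h1, h2, h3⟩ := h
        have s1 : Relation.ReflTransGen (ccGen A) (Sum.inr a) (Sum.inr c) :=
          Relation.ReflTransGen.single (Or.inl h1)
        have s2 : Relation.ReflTransGen (ccGen A) (Sum.inr c) (Sum.inl c) :=
          Relation.ReflTransGen.single (Or.inr (Or.inr ⟨c, h3, rfl, rfl⟩))
        have s3 : Relation.ReflTransGen (ccGen A) (Sum.inl c) (Sum.inl b) :=
          Relation.ReflTransGen.single (Or.inl h2)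
        exact s1.trans (s2.trans s3)
      | inr b => exact Relation.ReflTransGen.single (Or.inl h)

theorem CC_pol_inl {A : ESP} (a : A.Evt) : (CC A).pol (Sum.inl a) = !A.pol a := rfl
theorem CC_pol_inr {A : ESP} (a : A.Evt) : (CC A).pol (Sum.inr a) = A.pol a := rfl

/-- immediate causal links in copycat: `(i,a) ⇢ (j,a')` iff
either (1) `i = j`, `a ⇢_A a'`, and `(i,a)` is positive in `CC_A` or `(j,a')`
is negative in `CC_A`; or (2) `i ≠ j`, `a = a'`, and `(i,a)` is negative. -/
theorem copycat_immediate_causality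
    (A : ESP) (hA : A.toES.IsES) (p q : A.Evt ⊕ A.Evt) :
    (CC A).toES.imc p q ↔
      ((∃ a a', ((p = Sum.inl a ∧ q = Sum.inl a') ∨
                 (p = Sum.inr a ∧ q = Sum.inr a')) ∧
         A.toES.imc a a' ∧
         ((CC A).pol p = true ∨ (CC A).pol q = false)) ∨
       (∃ a, ((p = Sum.inl a ∧ q = Sum.inr a) ∨
              (p = Sum.inr a ∧ q = Sum.inl a)) ∧
         (CC A).pol p = false)) := by
  obtain ⟨hrefl, htrans, hanti, -⟩ := hA
  have L := cc_le_iff A hrefl htrans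
  constructor
  · rintro ⟨⟨hle, hne⟩, himm⟩
    have hle' := (L p q).mp hle
    cases p with
    | inl a =>
      cases q with
      | inl b =>
        simp only [ccR] at hle'
        left
        refine ⟨a, b, Or.inl ⟨rfl, rfl⟩, ⟨⟨hle', fun h => hne (by rw [h])⟩, ?_⟩, ?_⟩
        · intro c h1 h2
          have := himm (Sum.inl c) ((L _ _).mpr h1) ((L _ _).mpr h2)
          rcases this with h | h
          · exact Or.inl (Sum.inl.inj h)
          · exact Or.inr (Sum.inl.inj h)
        · by_contra h
          push_neg at h
          obtain ⟨h1, h2⟩ := h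
          simp only [CC_pol_inl, ne_eq, Bool.not_eq_true, Bool.not_eq_false'] at h1 h2
          have s1 : (CC A).toES.le (Sum.inl a) (Sum.inr a) :=
            (L _ _).mpr ⟨a, hrefl a, hrefl a, h1⟩
          have s2 : (CC A).toES.le (Sum.inr a) (Sum.inl b) :=
            (L _ _).mpr ⟨b, hle', hrefl b, h2⟩
          rcases himm (Sum.inr a) s1 s2 with h | h <;> simp at h
      | inr b =>
        simp only [ccR] at hle'
        obtain ⟨c, h1, h2, hc⟩ := hle'
        have s1 : (CC A).toES.le (Sum.inl a) (Sum.inl c) := (L _ _).mpr h1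
        have s2 : (CC A).toES.le (Sum.inl c) (Sum.inr b) := (L _ _).mpr ⟨c, hrefl c, h2, hc⟩
        have s3 : (CC A).toES.le (Sum.inl a) (Sum.inr c) := (L _ _).mpr ⟨c, h1, hrefl c, hc⟩
        have s4 : (CC A).toES.le (Sum.inr c) (Sum.inr b) := (L _ _).mpr h2
        have hca : c = a := by
          rcases himm (Sum.inl c) s1 s2 with h | h
          · exact Sum.inl.inj h
          · cases h
        have hcb : c = b := by
          rcases himm (Sum.inr c) s3 s4 with h | h
          · cases h
          · exact Sum.inr.inj h
        right
        refine ⟨a, Or.inl ⟨rfl, by rw [← hcb, hca]⟩, ?_⟩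
        simp [CC_pol_inl, hca ▸ hc]
    | inr a =>
      cases q with
      | inl b =>
        simp only [ccR] at hle'
        obtain ⟨c, h1, h2, hc⟩ := hle'
        have s1 : (CC A).toES.le (Sum.inr a) (Sum.inr c) := (L _ _).mpr h1
        have s2 : (CC A).toES.le (Sum.inr c) (Sum.inl b) := (L _ _).mpr ⟨c, hrefl c, h2, hc⟩
        have s3 : (CC A).toES.le (Sum.inr a) (Sum.inl c) := (L _ _).mpr ⟨c, h1, hrefl c, hc⟩
        have s4 : (CC A).toES.le (Sum.inl c) (Sum.inl b) := (L _ _).mpr h2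
        have hca : c = a := by
          rcases himm (Sum.inr c) s1 s2 with h | h
          · exact Sum.inr.inj h
          · cases h
        have hcb : c = b := by
          rcases himm (Sum.inl c) s3 s4 with h | h
          · cases h
          · exact Sum.inl.inj h
        right
        refine ⟨a, Or.inr ⟨rfl, by rw [← hcb, hca]⟩, ?_⟩
        simp [CC_pol_inr, hca ▸ hc]
      | inr b =>
        simp only [ccR] at hle'
        left
        refine ⟨a, b, Or.inr ⟨rfl, rfl⟩, ⟨⟨hle', fun h => hne (by rw [h])⟩, ?_⟩, ?_⟩
        · intro c h1 h2
          have := himm (Sum.inr c) ((L _ _).mpr h1) ((L _ _).mpr h2)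
          rcases this with h | h
          · exact Or.inl (Sum.inr.inj h)
          · exact Or.inr (Sum.inr.inj h)
        · by_contra h
          push_neg at h
          obtain ⟨h1, h2⟩ := h
          simp only [CC_pol_inr, ne_eq, Bool.not_eq_true, Bool.not_eq_false] at h1 h2
          have s1 : (CC A).toES.le (Sum.inr a) (Sum.inl a) :=
            (L _ _).mpr ⟨a, hrefl a, hrefl a, h1⟩
          have s2 : (CC A).toES.le (Sum.inl a) (Sum.inr b) :=
            (L _ _).mpr ⟨b, hle', hrefl b, h2⟩
          rcases himm (Sum.inl a) s1 s2 with h | h <;> simp at h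
  · rintro (⟨a, b, (⟨rfl, rfl⟩ | ⟨rfl, rfl⟩), ⟨⟨hab, hne⟩, himc⟩, hpol⟩ |
            ⟨a, (⟨rfl, rfl⟩ | ⟨rfl, rfl⟩), hpol⟩)
    · -- case (1), left side
      simp only [CC_pol_inl, Bool.not_eq_true', Bool.not_eq_false'] at hpol
      refine ⟨⟨(L _ _).mpr hab, fun h => hne (Sum.inl.inj h)⟩, ?_⟩
      intro c hc1 hc2
      have h1 := (L _ _).mp hc1
      have h2 := (L _ _).mp hc2
      cases c with
      | inl d =>
        simp only [ccR] at h1 h2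
        rcases himc d h1 h2 with rfl | rfl
        · exact Or.inl rfl
        · exact Or.inr rfl
      | inr d =>
        exfalso
        simp only [ccR] at h1 h2
        obtain ⟨e, hae, hed, hpe⟩ := h1
        obtain ⟨f, hdf, hfb, hpf⟩ := h2
        have hef : A.le e f := htrans _ _ _ hed hdf
        have he := himc e hae (htrans _ _ _ hef hfb)
        have hf := himc f (htrans _ _ _ hae hef) hfb
        rcases he with rfl | rfl <;> rcases hf with rfl | rfl
        · rw [hpe] at hpf; exact Bool.noConfusion hpf
        · rcases hpol with h | h
          · rw [hpe] at h; exact Bool.noConfusion h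
          · rw [hpf] at h; exact Bool.noConfusion h
        · exact hne (hanti _ _ hab (htrans _ _ _ hed hdf))
        · rw [hpe] at hpf; exact Bool.noConfusion hpf
    · -- case (1), right side
      simp only [CC_pol_inr] at hpol
      refine ⟨⟨(L _ _).mpr hab, fun h => hne (Sum.inr.inj h)⟩, ?_⟩
      intro c hc1 hc2
      have h1 := (L _ _).mp hc1
      have h2 := (L _ _).mp hc2
      cases c with
      | inr d =>
        simp only [ccR] at h1 h2
        rcases himc d h1 h2 with rfl | rfl
        · exact Or.inl rfl
        · exact Or.inr rfl
      | inl d =>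
        exfalso
        simp only [ccR] at h1 h2
        obtain ⟨e, hae, hed, hpe⟩ := h1
        obtain ⟨f, hdf, hfb, hpf⟩ := h2
        have hef : A.le e f := htrans _ _ _ hed hdf
        have he := himc e hae (htrans _ _ _ hef hfb)
        have hf := himc f (htrans _ _ _ hae hef) hfb
        rcases he with rfl | rfl <;> rcases hf with rfl | rfl
        · rw [hpe] at hpf; exact Bool.noConfusion hpf
        · rcases hpol with h | h
          · rw [hpe] at h; exact Bool.noConfusion h
          · rw [hpf] at h; exact Bool.noConfusion h
        · exact hne (hanti _ _ hab (htrans _ _ _ hed hdf))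
        · rw [hpe] at hpf; exact Bool.noConfusion hpf
    · -- case (2), inl to inr
      simp only [CC_pol_inl, Bool.not_eq_false'] at hpol
      refine ⟨⟨(L _ _).mpr ⟨a, hrefl a, hrefl a, hpol⟩, fun h => by cases h⟩, ?_⟩
      intro c hc1 hc2
      have h1 := (L _ _).mp hc1
      have h2 := (L _ _).mp hc2
      cases c with
      | inl d =>
        simp only [ccR] at h1 h2
        obtain ⟨e, hde, hea, hpe⟩ := h2
        have : d = a := hanti _ _ (htrans _ _ _ hde hea) h1
        exact Or.inl (by rw [this])
      | inr d =>
        simp only [ccR] at h1 h2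
        obtain ⟨e, hae, hed, hpe⟩ := h1
        have : d = a := hanti _ _ h2 (htrans _ _ _ hae hed)
        exact Or.inr (by rw [this])
    · -- case (2), inr to inl
      simp only [CC_pol_inr] at hpol
      refine ⟨⟨(L _ _).mpr ⟨a, hrefl a, hrefl a, hpol⟩, fun h => by cases h⟩, ?_⟩
      intro c hc1 hc2
      have h1 := (L _ _).mp hc1
      have h2 := (L _ _).mp hc2
      cases c with
      | inr d =>
        simp only [ccR] at h1 h2
        obtain ⟨e, hde, hea, hpe⟩ := h2
        have : d = a := hanti _ _ (htrans _ _ _ hde hea) h1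
        exact Or.inl (by rw [this])
      | inl d =>
        simp only [ccR] at h1 h2
        obtain ⟨e, hae, hed, hpe⟩ := h1
        have : d = a := hanti _ _ h2 (htrans _ _ _ hae hed)
        exact Or.inr (by rw [this])
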